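/- Let A be a finite abelian group and let K be a subgroup of A with A/K cyclic. Then Σ_{L ∈ Cocyc(A), L ≤ K} α_L = 1, the sum running over all subgroups L of A contained in K such that A/L is cyclic. -/

import Mathlib

section CWAux
open Subgroup
open scoped Pointwise

variable {G : Type*} [CommGroup G]

lemma CW.mem_zpowers_mul_of_coprime {a b : G}
    (h : Nat.Coprime (orderOf a) (orderOf b)) : a ∈ zpowers (a * b) := by
  have hcop : IsCoprime (orderOf a : ℤ) (orderOf b : ℤ) := Int.isCoprime_iff_gcd_eq_one.mpr h
  obtain ⟨u, v, huv⟩ := hcop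
  refine ⟨v * orderOf b, ?_⟩
  have hb : (b : G) ^ (v * (orderOf b : ℤ)) = 1 := by
    rw [mul_comm, zpow_mul, zpow_natCast, pow_orderOf_eq_one, one_zpow]
  have ha' : (a : G) ^ (u * (orderOf a : ℤ)) = 1 := by
    rw [mul_comm, zpow_mul, zpow_natCast, pow_orderOf_eq_one, one_zpow]
  calc (a * b) ^ (v * (orderOf b : ℤ))
      = a ^ (v * (orderOf b : ℤ)) * b ^ (v * (orderOf b : ℤ)) := mul_zpow _ _ _
    _ = a ^ (v * (orderOf b : ℤ)) * 1 := by rw [hb]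
    _ = a ^ (u * (orderOf a : ℤ) + v * (orderOf b : ℤ)) := by
        rw [zpow_add, ha', one_mul, mul_one]
    _ = a := by rw [huv, zpow_one]

lemma CW.not_dvd_orderOf_of_mem_iSup {ι : Sort*} {f : ι → Subgroup G} {pr : ι → ℕ}
    {p : ℕ} (hp : p.Prime) (hpr : ∀ i, (pr i).Prime) (hne : ∀ i, pr i ≠ p)
    (hf : ∀ i, ∀ x ∈ f i, ∃ n, orderOf x = pr i ^ n)
    {z : G} (hz : z ∈ ⨆ i, f i) : ¬ p ∣ orderOf z := by
  refine Subgroup.iSup_induction f (C := fun w => ¬ p ∣ orderOf w) hz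
    (fun i x hx => ?_) (by simp [hp.one_lt.ne']) ?_
  · obtain ⟨n, hn⟩ := hf i x hx
    rw [hn]
    intro hdvd
    rcases n with _ | n
    · rw [pow_zero, Nat.dvd_one] at hdvd; exact hp.ne_one hdvd
    · exact hne i ((Nat.prime_dvd_prime_iff_eq hp (hpr i)).mp (hp.dvd_of_dvd_pow hdvd)).symm
  · intro x y hx hy hdvd
    rcases (Nat.Prime.dvd_mul hp).mp
      (hdvd.trans (Commute.all x y).orderOf_mul_dvd_mul_orderOf) with h | h
    exacts [hx h, hy h]

lemma CW.iSup_inf_primary {ι : Type*} {f : ι → Subgroup G} {pr : ι → ℕ}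
    (hpr : ∀ i, (pr i).Prime) (hf : ∀ i, ∀ x ∈ f i, ∃ n, orderOf x = pr i ^ n)
    (i₀ : ι) (hinj : ∀ i, pr i = pr i₀ → i = i₀)
    {B : Subgroup G} (hB : ∀ x, x ∈ B ↔ ∃ n, orderOf x = pr i₀ ^ n) (hfB : f i₀ ≤ B) :
    (⨆ i, f i) ⊓ B = f i₀ := by
  refine le_antisymm ?_ (le_inf (le_iSup f i₀) hfB)
  rintro x ⟨hx1, hx2⟩
  rw [iSup_split_single f i₀] at hx1
  have hx1' : x ∈ ((f i₀ : Set G) * ((⨆ (i) (_ : i ≠ i₀), f i : Subgroup G) : Set G)) := by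
    rw [← Subgroup.mul_normal]
    exact hx1
  obtain ⟨a, ha, z, hz, rfl⟩ := hx1'
  rw [SetLike.mem_coe, iSup_subtype'] at hz
  have hzord : ¬ pr i₀ ∣ orderOf z :=
    CW.not_dvd_orderOf_of_mem_iSup (f := fun i : {i : ι // i ≠ i₀} => f ↑i)
      (pr := fun i : {i : ι // i ≠ i₀} => pr ↑i) (hpr i₀) (fun i => hpr ↑i)
      (fun i h => i.2 (hinj ↑i h)) (fun i x hx => hf ↑i x hx) hz
  have hzB : z ∈ B := by
    have : z = a⁻¹ * (a * z) := by group
    rw [this]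
    exact B.mul_mem (B.inv_mem (hfB ha)) hx2
  obtain ⟨n, hn⟩ := (hB z).mp hzB
  have hz1 : z = 1 := by
    rcases n with _ | n
    · simpa [orderOf_eq_one_iff] using hn
    · exact absurd (hn ▸ dvd_pow_self (pr i₀) (Nat.succ_ne_zero n)) hzord
  simpa [hz1] using ha

lemma CW.mem_iSup_inf_primary [Finite G] {ι : Type*} {pr : ι → ℕ}
    (Bc : ι → Subgroup G) (hBc : ∀ i, ∀ x : G, x ∈ Bc i ↔ ∃ n, orderOf x = pr i ^ n)
    (hcover : ∀ q : ℕ, q.Prime → q ∣ Nat.card G → ∃ i, pr i = q)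
    (L : Subgroup G) {x : G} (hx : x ∈ L) : x ∈ ⨆ i, L ⊓ Bc i := by
  have key : ∀ n : ℕ, ∀ x : G, orderOf x = n → x ∈ L → x ∈ ⨆ i, L ⊓ Bc i := by
    intro n
    induction n using Nat.strong_induction_on with
    | _ n ih =>
      intro x hxn hxL
      rcases eq_or_ne n 1 with h1 | h1
      · have hx1 : x = 1 := by rw [← orderOf_eq_one_iff, hxn, h1]
        rw [hx1]; exact one_mem _
      · have hn0 : n ≠ 0 := by
          rw [← hxn]; exact (orderOf_pos x).ne'
        set p := n.minFac with hpdef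
        have hp : p.Prime := Nat.minFac_prime h1
        set k := n.factorization p with hkdef
        have hk0 : 0 < k := hp.factorization_pos_of_dvd hn0 (Nat.minFac_dvd n)
        set m := n / p ^ k with hm
        have hnm : p ^ k * m = n := Nat.ordProj_mul_ordCompl_eq_self n p
        have hm0 : m ≠ 0 := by
          intro h; rw [h, mul_zero] at hnm; exact hn0 hnm.symm
        have hcop : Nat.Coprime (p ^ k) m :=
          Nat.Coprime.pow_left k (Nat.coprime_ordCompl hp hn0)
        have : IsCoprime ((p ^ k : ℕ) : ℤ) ((m : ℕ) : ℤ) := by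
          rw [Int.isCoprime_iff_gcd_eq_one, Int.gcd_natCast_natCast]; exact hcop
        obtain ⟨u, v, huv⟩ := this
        have hxz : x = x ^ (u * (p ^ k : ℕ) : ℤ) * x ^ (v * (m : ℕ) : ℤ) := by
          rw [← zpow_add, huv, zpow_one]
        set y := x ^ (v * (m : ℕ) : ℤ) with hy
        set z := x ^ (u * (p ^ k : ℕ) : ℤ) with hz
        have hyL : y ∈ L := zpow_mem hxL _
        have hzL : z ∈ L := zpow_mem hxL _
        have hyB : ∃ i, y ∈ L ⊓ Bc i := by
          have hpn : p ∣ Nat.card G := dvd_trans (hxn ▸ Nat.minFac_dvd n)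
            (orderOf_dvd_natCard x)
          obtain ⟨i, hi⟩ := hcover p hp hpn
          have hord : orderOf y ∣ p ^ k := by
            have hmn : (m * p ^ k : ℕ) = n := by rw [mul_comm]; exact hnm
            rw [orderOf_dvd_iff_pow_eq_one, hy, ← zpow_natCast, ← zpow_mul,
              mul_assoc, ← Nat.cast_mul, hmn, mul_comm v, zpow_mul, zpow_natCast,
              ← hxn, pow_orderOf_eq_one, one_zpow]
          obtain ⟨j, _, hj⟩ := (Nat.dvd_prime_pow hp).mp hord
          exact ⟨i, hyL, (hBc i y).mpr ⟨j, by rw [hj, hi]⟩⟩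
        have hzS : z ∈ ⨆ i, L ⊓ Bc i := by
          have hordz : orderOf z ∣ m := by
            rw [orderOf_dvd_iff_pow_eq_one, hz, ← zpow_natCast, ← zpow_mul,
              mul_assoc, ← Nat.cast_mul, hnm, mul_comm u, zpow_mul, zpow_natCast,
              ← hxn, pow_orderOf_eq_one, one_zpow]
          have hlt : orderOf z < n := lt_of_le_of_lt (Nat.le_of_dvd (Nat.pos_of_ne_zero hm0) hordz)
            (by
              conv_rhs => rw [← hnm]
              have : 1 < p ^ k := Nat.one_lt_pow hk0.ne' hp.one_lt
              calc m = 1 * m := (one_mul m).symm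
                _ < p ^ k * m := (Nat.mul_lt_mul_right (Nat.pos_of_ne_zero hm0)).mpr this)
          exact ih _ hlt z rfl hzL
        obtain ⟨i, hyBi⟩ := hyB
        rw [hxz]
        exact mul_mem hzS (le_iSup (fun i => L ⊓ Bc i) i hyBi)
  exact key _ x rfl hx

lemma CW.subgroup_eq_of_card_eq {Q : Type*} [Group Q] [Fintype Q] [IsCyclic Q]
    {H₁ H₂ : Subgroup Q} {d : ℕ} (hd : 0 < d)
    (h₁ : Nat.card H₁ = d) (h₂ : Nat.card H₂ = d) : H₁ = H₂ := by
  classical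
  have key : ∀ H : Subgroup Q, Nat.card H = d →
      (H : Set Q).toFinset = Finset.univ.filter (fun a : Q => a ^ d = 1) := by
    intro H hH
    apply Finset.eq_of_subset_of_card_le
    · intro x hx
      rw [Set.mem_toFinset] at hx
      refine Finset.mem_filter.mpr ⟨Finset.mem_univ _, ?_⟩
      have hdvd : orderOf x ∣ d := hH ▸ H.orderOf_dvd_natCard hx
      exact orderOf_dvd_iff_pow_eq_one.mp hdvd
    · have hle : (Finset.univ.filter (fun a : Q => a ^ d = 1)).card ≤ d :=
        IsCyclic.card_pow_eq_one_le hd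
      rw [Set.toFinset_card]
      calc (Finset.univ.filter (fun a : Q => a ^ d = 1)).card ≤ d := hle
        _ = Nat.card H := hH.symm
        _ = Fintype.card H := Nat.card_eq_fintype_card
  have e := (key H₁ h₁).trans (key H₂ h₂).symm
  ext x
  constructor <;> intro hx
  · have : x ∈ (H₁ : Set Q).toFinset := Set.mem_toFinset.mpr hx
    rw [e] at this
    exact Set.mem_toFinset.mp this
  · have : x ∈ (H₂ : Set Q).toFinset := Set.mem_toFinset.mpr hx
    rw [← e] at this
    exact Set.mem_toFinset.mp this

lemma CW.relIndex_eq_card_map (M N : Subgroup G) :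
    M.relIndex N = Nat.card (N.map (QuotientGroup.mk' M)) := by
  have hker : ((QuotientGroup.mk' M).domRestrict N).ker = M.subgroupOf N := by
    rw [MonoidHom.ker_restrict, QuotientGroup.ker_mk']
  have hrange : ((QuotientGroup.mk' M).domRestrict N).range = N.map (QuotientGroup.mk' M) := by
    rw [MonoidHom.restrict_range]
  rw [Subgroup.relIndex, Subgroup.index, ← hker, ← hrange]
  exact Nat.card_congr (QuotientGroup.quotientKerEquivRange _).toEquiv

lemma CW.isCyclic_subgroupOf_quotient (B L : Subgroup G) [hL : IsCyclic (G ⧸ L)] :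
    IsCyclic (↥B ⧸ L.subgroupOf B) := by
  have hker : ((QuotientGroup.mk' L).domRestrict B).ker = L.subgroupOf B := by
    rw [MonoidHom.ker_restrict, QuotientGroup.ker_mk']
  have e := QuotientGroup.quotientKerEquivRange ((QuotientGroup.mk' L).domRestrict B)
  have e2 := (QuotientGroup.quotientMulEquivOfEq hker).symm.trans e
  exact isCyclic_of_surjective e2.symm e2.symm.surjective

lemma CW.isCyclic_quotient_of_le {M L : Subgroup G} (h : M ≤ L) [IsCyclic (G ⧸ M)] :
    IsCyclic (G ⧸ L) := by
  refine isCyclic_of_surjective (QuotientGroup.map M L (MonoidHom.id G) h) ?_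
  rintro ⟨y⟩
  exact ⟨QuotientGroup.mk y, rfl⟩

lemma CW.isCyclic_quotient_of_components {ι : Type*} [Fintype ι] [Fintype G] {pr : ι → ℕ}
    (hpr : ∀ i, (pr i).Prime) (hinj : ∀ i j, pr i = pr j → i = j)
    (hcover : ∀ q : ℕ, q.Prime → q ∣ Nat.card G → ∃ i, pr i = q)
    (Bc : ι → Subgroup G) (hBc : ∀ i, ∀ x : G, x ∈ Bc i ↔ ∃ n, orderOf x = pr i ^ n)
    (L : Subgroup G)
    (hcyc : ∀ i, IsCyclic (↥(Bc i) ⧸ L.subgroupOf (Bc i))) :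
    IsCyclic (G ⧸ L) := by
  classical
  set π := QuotientGroup.mk' L with hπ
  have hπsurj : Function.Surjective π := QuotientGroup.mk'_surjective L
  set BQ : ι → Subgroup (G ⧸ L) := fun i => (Bc i).map π with hBQ
  -- each BQ i is cyclic
  have hBQcyc : ∀ i, IsCyclic ↥(BQ i) := by
    intro i
    have hker : (π.domRestrict (Bc i)).ker = L.subgroupOf (Bc i) := by
      rw [MonoidHom.ker_restrict, hπ, QuotientGroup.ker_mk']
    have hrange : (π.domRestrict (Bc i)).range = BQ i := by
      rw [MonoidHom.restrict_range]
    have e := QuotientGroup.quotientKerEquivRange (π.domRestrict (Bc i))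
    have e2 := ((QuotientGroup.quotientMulEquivOfEq hker).symm.trans e).trans
      (MulEquiv.subgroupCongr hrange)
    haveI := hcyc i
    exact isCyclic_of_surjective e2 e2.surjective
  -- the BQ i cover
  have hcov : (⊤ : Subgroup (G ⧸ L)) = ⨆ i, BQ i := by
    have h1 : (⊤ : Subgroup G) ≤ ⨆ i, (⊤ : Subgroup G) ⊓ Bc i := fun x _ =>
      CW.mem_iSup_inf_primary Bc hBc hcover ⊤ (mem_top x)
    have h2 : (⊤ : Subgroup G) = ⨆ i, Bc i := by
      simp only [top_inf_eq] at h1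
      exact le_antisymm h1 le_top
    calc (⊤ : Subgroup (G ⧸ L)) = Subgroup.map π ⊤ := (Subgroup.map_top_of_surjective π hπsurj).symm
      _ = Subgroup.map π (⨆ i, Bc i) := by rw [← h2]
      _ = ⨆ i, BQ i := Subgroup.map_iSup π Bc
  -- elements of BQ i have pr i power order
  have hBQord : ∀ i, ∀ y, y ∈ BQ i → ∃ n, orderOf y = pr i ^ n := by
    intro i y hy
    obtain ⟨x, hx, rfl⟩ := hy
    obtain ⟨m, hm⟩ := (hBc i x).mp hx
    have : orderOf (π x) ∣ pr i ^ m := hm ▸ orderOf_map_dvd π x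
    obtain ⟨n, _, hn⟩ := (Nat.dvd_prime_pow (hpr i)).mp this
    exact ⟨n, hn⟩
  -- generators
  have hgen : ∀ i, ∃ g : G ⧸ L, g ∈ BQ i ∧ BQ i ≤ Subgroup.zpowers g := by
    intro i
    haveI := hBQcyc i
    obtain ⟨g, hg⟩ := IsCyclic.exists_generator (α := ↥(BQ i))
    refine ⟨↑g, g.2, fun x hx => ?_⟩
    obtain ⟨k, hk⟩ := hg ⟨x, hx⟩
    exact ⟨k, congrArg Subtype.val hk⟩
  choose gg hggmem hggle using hgen
  set g : G ⧸ L := ∏ i, gg i with hg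
  have hmain : ∀ i, gg i ∈ Subgroup.zpowers g := by
    intro i
    have hsplit : g = gg i * ∏ j ∈ Finset.univ.erase i, gg j := by
      rw [hg, Finset.mul_prod_erase _ _ (Finset.mem_univ i)]
    have hrest : (∏ j ∈ Finset.univ.erase i, gg j) ∈
        ⨆ j : {j : ι // j ≠ i}, BQ ↑j := by
      refine Subgroup.prod_mem _ fun j hj => ?_
      have hji : j ≠ i := (Finset.mem_erase.mp hj).1
      exact le_iSup (fun j : {j : ι // j ≠ i} => BQ ↑j) ⟨j, hji⟩ (hggmem j)
    have hnd : ¬ pr i ∣ orderOf (∏ j ∈ Finset.univ.erase i, gg j) :=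
      CW.not_dvd_orderOf_of_mem_iSup (f := fun j : {j : ι // j ≠ i} => BQ ↑j)
        (pr := fun j : {j : ι // j ≠ i} => pr ↑j) (hpr i) (fun j => hpr ↑j)
        (fun j h => j.2 (hinj ↑j i h)) (fun j y hy => hBQord ↑j y hy) hrest
    obtain ⟨n, hn⟩ := hBQord i _ (hggmem i)
    have hcop : Nat.Coprime (orderOf (gg i)) (orderOf (∏ j ∈ Finset.univ.erase i, gg j)) := by
      rw [hn]
      exact Nat.Coprime.pow_left n (((hpr i).coprime_iff_not_dvd).mpr hnd)
    rw [hsplit]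
    exact CW.mem_zpowers_mul_of_coprime hcop
  refine ⟨⟨g, fun x => ?_⟩⟩
  have : x ∈ (⊤ : Subgroup (G ⧸ L)) := mem_top x
  rw [hcov] at this
  exact iSup_le (fun i => (hggle i).trans (zpowers_le.mpr (hmain i))) this

open scoped Classical in
lemma CW.exists_unique_next {G : Type*} [CommGroup G] [Fintype G] {p : ℕ}
    (hp : p.Prime) (hG : IsPGroup p G) {K M : Subgroup G}
    (hMcyc : IsCyclic (G ⧸ M)) (hMK : M < K) :
    ∃! N : Subgroup G, M < N ∧ N ≤ K ∧ M.relIndex N = p := by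
  classical
  haveI : Fact p.Prime := ⟨hp⟩
  haveI : IsCyclic (G ⧸ M) := hMcyc
  set π := QuotientGroup.mk' M with hπ
  have hπsurj : Function.Surjective π := QuotientGroup.mk'_surjective M
  have hQp : IsPGroup p (G ⧸ M) := IsPGroup.to_quotient hG M
  set KQ := K.map π with hKQ
  have hKQp : IsPGroup p ↥KQ := hQp.to_subgroup KQ
  have hKQne : KQ ≠ ⊥ := by
    obtain ⟨x, hxK, hxM⟩ := SetLike.exists_of_lt hMK
    intro hbot
    have : π x ∈ KQ := ⟨x, hxK, rfl⟩
    rw [hbot, Subgroup.mem_bot] at this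
    exact hxM ((QuotientGroup.eq_one_iff x).mp this)
  have hpdvd : p ∣ Nat.card ↥KQ := by
    obtain ⟨n, hn⟩ := (IsPGroup.iff_card (p := p) (G := ↥KQ)).mp hKQp
    rcases n with _ | n
    · exact absurd ((Subgroup.eq_bot_iff_card (H := KQ)).mpr (by rw [hn, pow_zero])) hKQne
    · exact hn ▸ dvd_pow_self p (Nat.succ_ne_zero n)
  obtain ⟨x0, hx0⟩ := exists_prime_orderOf_dvd_card' (G := ↥KQ) p hpdvd
  set h0 : G ⧸ M := ↑x0 with hh0
  have hordh0 : orderOf h0 = p :=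
    (orderOf_injective KQ.subtype Subtype.coe_injective x0).trans hx0
  set H := Subgroup.zpowers h0 with hH
  have hcardH : Nat.card ↥H = p := by rw [hH, Nat.card_zpowers, hordh0]
  have hHK : H ≤ KQ := (zpowers_le).mpr x0.2
  have keyN : ∀ N : Subgroup G, (M < N ∧ N ≤ K ∧ M.relIndex N = p) ↔
      (M ≤ N ∧ N.map π = H) := by
    intro N
    constructor
    · rintro ⟨hMN, hNK, hrel⟩
      refine ⟨le_of_lt hMN, ?_⟩
      have hcard : Nat.card ↥(N.map π) = p := by
        rw [← CW.relIndex_eq_card_map, hrel]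
      exact CW.subgroup_eq_of_card_eq hp.pos hcard hcardH
    · rintro ⟨hMN, hmap⟩
      have hcomap : Subgroup.comap π (N.map π) = N := by
        rw [Subgroup.comap_map_eq, hπ, QuotientGroup.ker_mk', sup_eq_left.mpr hMN]
      refine ⟨?_, ?_, ?_⟩
      · rcases eq_or_lt_of_le hMN with heq | hlt
        · exfalso
          have : N.map π = ⊥ := by
            rw [← heq]
            ext y
            simp only [Subgroup.mem_map, Subgroup.mem_bot]
            constructor
            · rintro ⟨x, hx, rfl⟩
              exact (QuotientGroup.eq_one_iff x).mpr hx
            · rintro rfl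
              exact ⟨1, one_mem _, map_one _⟩
          rw [hmap] at this
          rw [this] at hcardH
          simp only [Subgroup.card_bot] at hcardH
          exact hp.ne_one hcardH.symm
        · exact hlt
      · have : N ≤ Subgroup.comap π KQ := by
          rw [← hcomap]
          exact Subgroup.comap_mono (hmap ▸ hHK)
        rwa [hKQ, Subgroup.comap_map_eq, hπ, QuotientGroup.ker_mk',
          sup_eq_left.mpr (le_of_lt hMK)] at this
      · rw [CW.relIndex_eq_card_map, hmap, hcardH]
  -- existence
  have hNex : ∃ N, M ≤ N ∧ N.map π = H := by
    refine ⟨Subgroup.comap π H, ?_, ?_⟩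
    · intro m hm
      have : π m = 1 := (QuotientGroup.eq_one_iff m).mpr hm
      simp only [Subgroup.mem_comap, this]
      exact one_mem _
    · rw [Subgroup.map_comap_eq, MonoidHom.range_eq_top.mpr hπsurj, top_inf_eq]
  obtain ⟨N, hN1, hN2⟩ := hNex
  refine ⟨N, (keyN N).mpr ⟨hN1, hN2⟩, fun N' hN' => ?_⟩
  obtain ⟨hN'1, hN'2⟩ := (keyN N').mp hN'
  have hc1 : Subgroup.comap π (N'.map π) = N' := by
    rw [Subgroup.comap_map_eq, hπ, QuotientGroup.ker_mk', sup_eq_left.mpr hN'1]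
  have hc2 : Subgroup.comap π (N.map π) = N := by
    rw [Subgroup.comap_map_eq, hπ, QuotientGroup.ker_mk', sup_eq_left.mpr hN1]
  rw [← hc1, ← hc2, hN'2, hN2]

open scoped Classical in
lemma CW.sum_per_prime {G : Type*} [CommGroup G] [Fintype G] {p : ℕ}
    (hp : p.Prime) (hG : IsPGroup p G) (K : Subgroup G) (hK : IsCyclic (G ⧸ K)) :
    ∑ N ∈ Finset.univ.filter (fun N : Subgroup G => IsCyclic (G ⧸ N) ∧ N ≤ K),
      (1 - (Nat.card {M : Subgroup G // IsCyclic (G ⧸ M) ∧ M < N ∧ M.relIndex N = p} : ℤ))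
      = 1 := by
  classical
  set T := Finset.univ.filter (fun N : Subgroup G => IsCyclic (G ⧸ N) ∧ N ≤ K) with hT
  have hKT : K ∈ T := Finset.mem_filter.mpr ⟨Finset.mem_univ _, hK, le_refl _⟩
  have hcard : ∀ N : Subgroup G,
      (Nat.card {M : Subgroup G // IsCyclic (G ⧸ M) ∧ M < N ∧ M.relIndex N = p})
      = (Finset.univ.filter (fun M : Subgroup G =>
          IsCyclic (G ⧸ M) ∧ M < N ∧ M.relIndex N = p)).card := by
    intro N
    rw [Nat.card_eq_fintype_card, Fintype.card_subtype]
  have hsigma : ∑ N ∈ T, (Nat.card {M : Subgroup G //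
      IsCyclic (G ⧸ M) ∧ M < N ∧ M.relIndex N = p} : ℤ) = ((T.erase K).card : ℤ) := by
    have h1 : ∑ N ∈ T, (Nat.card {M : Subgroup G //
        IsCyclic (G ⧸ M) ∧ M < N ∧ M.relIndex N = p}) = (T.erase K).card := by
      rw [Finset.sum_congr rfl (fun N _ => hcard N), ← Finset.card_sigma]
      refine Finset.card_bij (fun a _ => a.2) ?_ ?_ ?_
      · rintro ⟨N, M⟩ ha
        simp only [hT, Finset.mem_sigma, Finset.mem_filter] at ha
        obtain ⟨⟨-, hNcyc, hNK⟩, -, hMcyc, hMN, hMrel⟩ := ha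
        refine Finset.mem_erase.mpr ⟨ne_of_lt (lt_of_lt_of_le hMN hNK), ?_⟩
        exact Finset.mem_filter.mpr ⟨Finset.mem_univ _, hMcyc, (le_of_lt hMN).trans hNK⟩
      · rintro ⟨N₁, M₁⟩ ha ⟨N₂, M₂⟩ hb hab
        simp only at hab
        subst hab
        simp only [hT, Finset.mem_sigma, Finset.mem_filter] at ha hb
        obtain ⟨⟨-, hN₁cyc, hN₁K⟩, -, hM₁cyc, hM₁N, hM₁rel⟩ := ha
        obtain ⟨⟨-, hN₂cyc, hN₂K⟩, -, hM₂cyc, hM₂N, hM₂rel⟩ := hb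
        obtain ⟨N₀, -, hN₀un⟩ := CW.exists_unique_next hp hG hM₁cyc
          (lt_of_lt_of_le hM₁N hN₁K)
        have e1 : N₁ = N₀ := hN₀un N₁ ⟨hM₁N, hN₁K, hM₁rel⟩
        have e2 : N₂ = N₀ := hN₀un N₂ ⟨hM₂N, hN₂K, hM₂rel⟩
        simp [e1, e2]
      · intro M hM
        rw [Finset.mem_erase, Finset.mem_filter] at hM
        obtain ⟨hMne, -, hMcyc, hMK⟩ := hM
        obtain ⟨N, ⟨hMN, hNK, hrel⟩, -⟩ := CW.exists_unique_next hp hG hMcyc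
          (lt_of_le_of_ne hMK hMne)
        haveI := hMcyc
        have hNcyc : IsCyclic (G ⧸ N) := CW.isCyclic_quotient_of_le (le_of_lt hMN)
        refine ⟨⟨N, M⟩, ?_, rfl⟩
        simp only [hT, Finset.mem_sigma, Finset.mem_filter]
        exact ⟨⟨Finset.mem_univ _, hNcyc, hNK⟩, Finset.mem_univ _, hMcyc, hMN, hrel⟩
    calc ∑ N ∈ T, (Nat.card {M : Subgroup G //
          IsCyclic (G ⧸ M) ∧ M < N ∧ M.relIndex N = p} : ℤ)
        = ((∑ N ∈ T, Nat.card {M : Subgroup G //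
            IsCyclic (G ⧸ M) ∧ M < N ∧ M.relIndex N = p} : ℕ) : ℤ) := by push_cast; ring
      _ = ((T.erase K).card : ℤ) := by rw [h1]
  rw [Finset.sum_sub_distrib, hsigma, Finset.sum_const, Finset.card_erase_of_mem hKT]
  have hpos : 1 ≤ T.card := Finset.card_pos.mpr ⟨K, hKT⟩
  push_cast [Nat.cast_sub hpos]
  ring

end CWAux


/-- `α_{K,p}` from the paper: `1` minus the number of cocyclic subgroups `L` of the
`p`-primary component `A_p` of `A` that are proper subgroups of `K_p = K ∩ A_p` of
index `p` (and `0` for non-prime `p`, which is never used). -/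
noncomputable def alphaP (A : Type*) [CommGroup A] (p : ℕ) (K : Subgroup A) : ℤ :=
  if hp : p.Prime then
    haveI : Fact p.Prime := ⟨hp⟩
    1 - (Nat.card {L : Subgroup ↥(CommGroup.primaryComponent A p) //
          IsCyclic (↥(CommGroup.primaryComponent A p) ⧸ L) ∧
          L < K.subgroupOf (CommGroup.primaryComponent A p) ∧
          L.relIndex (K.subgroupOf (CommGroup.primaryComponent A p)) = p} : ℤ)
  else 0

/-- `α_K = ∏_{p ∣ |A|} α_{K,p}`. -/
noncomputable def alphaCW (A : Type*) [CommGroup A] (K : Subgroup A) : ℤ :=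
  ∏ p ∈ (Nat.card A).primeFactors, alphaP A p K

/-- Lemma (the `α`'s sum to `1`): if `K` is a cocyclic subgroup of the finite abelian
group `A` (i.e. `A/K` is cyclic), then `∑_{L ∈ Cocyc(A), L ≤ K} α_L = 1`. -/
theorem sum_alpha_eq_one {A : Type*} [CommGroup A] [Fintype A]
    (K : Subgroup A) (hK : IsCyclic (A ⧸ K)) :
    ∑ᶠ L ∈ {L : Subgroup A | IsCyclic (A ⧸ L) ∧ L ≤ K}, alphaCW A L = 1 := by
  classical
  set P := (Nat.card A).primeFactors with hP
  have hA0 : Nat.card A ≠ 0 := Nat.card_pos.ne'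
  have hpr : ∀ i : ↑P, (i : ℕ).Prime := fun i => Nat.prime_of_mem_primeFactors i.2
  set Bc : ↑P → Subgroup A := fun i =>
    CommGroup.primaryComponent A (i : ℕ) with hBcdef
  have hBc : ∀ i : ↑P, ∀ x : A, x ∈ Bc i ↔ ∃ n, orderOf x = (i : ℕ) ^ n := fun i x =>
    haveI : Fact (i : ℕ).Prime := ⟨hpr i⟩; CommGroup.mem_primaryComponent_iff_orderOf
  have hinj : ∀ i j : ↑P, (i : ℕ) = (j : ℕ) → i = j := fun i j h => Subtype.ext h
  have hcover : ∀ q : ℕ, q.Prime → q ∣ Nat.card A → ∃ i : ↑P, (i : ℕ) = q := fun q hq hdvd =>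
    ⟨⟨q, Nat.mem_primeFactors.mpr ⟨hq, hdvd, hA0⟩⟩, rfl⟩
  set F : ∀ i : ↑P, Subgroup ↥(Bc i) → ℤ := fun i M =>
    1 - (Nat.card {N : Subgroup ↥(Bc i) //
      IsCyclic (↥(Bc i) ⧸ N) ∧ N < M ∧ N.relIndex M = (i : ℕ)} : ℤ) with hF
  set t : ∀ i : ↑P, Finset (Subgroup ↥(Bc i)) := fun i =>
    Finset.univ.filter (fun M => IsCyclic (↥(Bc i) ⧸ M) ∧ M ≤ K.subgroupOf (Bc i)) with ht
  -- component computation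
  have hcomp : ∀ (g : ∀ i : ↑P, Subgroup ↥(Bc i)) (i : ↑P),
      (⨆ j : ↑P, (g j).map (Bc j).subtype).subgroupOf (Bc i) = g i := by
    intro g i
    have hsup : (⨆ j : ↑P, (g j).map (Bc j).subtype) ⊓ Bc i = (g i).map (Bc i).subtype :=
      CW.iSup_inf_primary (pr := fun j : ↑P => (j : ℕ)) hpr
        (fun j x hx => by
          obtain ⟨y, hy, rfl⟩ := hx
          exact (hBc j _).mp y.2)
        i (fun j h => hinj j i h) (hBc i) (Subgroup.map_subtype_le _)
    have h1 : (⨆ j : ↑P, (g j).map (Bc j).subtype).subgroupOf (Bc i)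
        = ((⨆ j : ↑P, (g j).map (Bc j).subtype) ⊓ Bc i).subgroupOf (Bc i) := by
      ext x
      simp only [Subgroup.mem_subgroupOf, Subgroup.mem_inf]
      exact ⟨fun h => ⟨h, x.2⟩, fun h => h.1⟩
    rw [h1, hsup]
    exact Subgroup.comap_map_eq_self_of_injective (Subgroup.subtype_injective _) (g i)
  have halpha : ∀ (L : Subgroup A) (i : ↑P), alphaP A (i : ℕ) L = F i (L.subgroupOf (Bc i)) := by
    intro L i
    simp only [alphaP, dif_pos (hpr i)]
    rfl
  have hsetS : {L : Subgroup A | IsCyclic (A ⧸ L) ∧ L ≤ K}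
      = ↑(Finset.univ.filter (fun L : Subgroup A => IsCyclic (A ⧸ L) ∧ L ≤ K)) := by
    ext L; simp
  rw [hsetS, finsum_mem_coe_finset]
  have hCW : ∀ L : Subgroup A, alphaCW A L = ∏ i : ↑P, F i (L.subgroupOf (Bc i)) := by
    intro L
    rw [alphaCW, ← Finset.prod_coe_sort]
    exact Finset.prod_congr rfl (fun i _ => halpha L i)
  calc ∑ L ∈ Finset.univ.filter (fun L : Subgroup A => IsCyclic (A ⧸ L) ∧ L ≤ K), alphaCW A L
      = ∑ L ∈ Finset.univ.filter (fun L : Subgroup A => IsCyclic (A ⧸ L) ∧ L ≤ K),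
          ∏ i : ↑P, F i (L.subgroupOf (Bc i)) :=
        Finset.sum_congr rfl (fun L _ => hCW L)
    _ = ∑ g ∈ Fintype.piFinset t, ∏ i : ↑P, F i (g i) := by
        refine Finset.sum_nbij' (fun L => fun i => L.subgroupOf (Bc i))
          (fun g => ⨆ j : ↑P, (g j).map (Bc j).subtype) ?_ ?_ ?_ ?_ ?_
        · intro L hL
          rw [Finset.mem_filter] at hL
          obtain ⟨-, hLcyc, hLK⟩ := hL
          haveI := hLcyc
          rw [Fintype.mem_piFinset]
          intro i
          rw [ht]
          refine Finset.mem_filter.mpr ⟨Finset.mem_univ _, ?_, ?_⟩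
          · exact CW.isCyclic_subgroupOf_quotient (Bc i) L
          · exact Subgroup.comap_mono hLK
        · intro g hg
          beta_reduce
          rw [Fintype.mem_piFinset] at hg
          refine Finset.mem_filter.mpr ⟨Finset.mem_univ _, ?_, ?_⟩
          · refine CW.isCyclic_quotient_of_components hpr hinj hcover Bc hBc _ (fun i => ?_)
            have hmem := hg i
            rw [ht] at hmem
            have hgi : IsCyclic (↥(Bc i) ⧸ g i) := (Finset.mem_filter.mp hmem).2.1
            have e := QuotientGroup.quotientMulEquivOfEq (hcomp g i)
            exact isCyclic_of_surjective e.symm e.symm.surjective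
          · refine iSup_le (fun j => ?_)
            have := hg j
            rw [ht] at this
            have hle := (Finset.mem_filter.mp this).2.2
            refine (Subgroup.map_mono hle).trans ?_
            rw [Subgroup.subgroupOf_map_subtype]
            exact inf_le_left
        · intro L hL
          beta_reduce
          rw [Finset.mem_filter] at hL
          have h1 : ∀ j : ↑P, (L.subgroupOf (Bc j)).map (Bc j).subtype = L ⊓ Bc j :=
            fun j => Subgroup.subgroupOf_map_subtype _ _
          rw [iSup_congr h1]
          refine le_antisymm (iSup_le (fun j => inf_le_left)) ?_
          intro x hx
          exact CW.mem_iSup_inf_primary Bc hBc hcover L hx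
        · intro g hg
          funext i
          beta_reduce
          exact hcomp g i
        · intro L hL
          rfl
    _ = ∏ i : ↑P, ∑ M ∈ t i, F i M := (Finset.prod_univ_sum t F).symm
    _ = ∏ i : ↑P, (1 : ℤ) := by
        refine Finset.prod_congr rfl (fun i _ => ?_)
        haveI : Fact (i : ℕ).Prime := ⟨hpr i⟩
        have hPG : IsPGroup (i : ℕ) ↥(Bc i) := CommGroup.primaryComponent.isPGroup
        haveI := hK
        have hKcyc : IsCyclic (↥(Bc i) ⧸ K.subgroupOf (Bc i)) :=
          CW.isCyclic_subgroupOf_quotient (Bc i) K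
        rw [ht, hF]
        exact CW.sum_per_prime (hpr i) hPG (K.subgroupOf (Bc i)) hKcyc
    _ = 1 := Finset.prod_const_one
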